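/- arXiv:1504.07783 — 2 statements merged into one kernel-verified Lean document; each statement's English description precedes it below -/
import Mathlib

section
/- The fundamental domains F and F_∞ are locally finite: for every compact subset C of H²×H², the set {γ ∈ Γ : C ∩ γ(F) ≠ ∅} is finite, and the set {γ ∈ Γ_∞ : C ∩ γ(F_∞) ≠ ∅} is finite. -/
noncomputable section

open scoped Classical
open MeasureTheory

namespace Hilbert

/-- `k₀ = 2` if `k ≡ 1 (mod 4)` and `k₀ = 1` otherwise. -/
def k0 (k : ℕ) : ℝ := if k % 4 = 1 then 2 else 1

/-- `ω = (1 + √k)/k₀`. -/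
def omg (k : ℕ) : ℝ := (1 + Real.sqrt k) / k0 k

/-- `ω' = (1 - √k)/k₀`, the algebraic conjugate of `ω`. -/
def omg' (k : ℕ) : ℝ := (1 - Real.sqrt k) / k0 k

/-- The ring `R = ℤ[ω]`, realized inside `ℝ × ℝ` via the pair of real embeddings
`α ↦ (α, α')` of `K = ℚ(√k)`. -/
def R (k : ℕ) : Subring (ℝ × ℝ) := Subring.closure {(omg k, omg' k)}

/-- The ambient space `ℝ⁴`, with coordinates `(x₁, x₂, y₁, y₂)`. -/
abbrev Pt : Type := ℝ × ℝ × ℝ × ℝ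

def x1 (p : Pt) : ℝ := p.1
def x2 (p : Pt) : ℝ := p.2.1
def y1 (p : Pt) : ℝ := p.2.2.1
def y2 (p : Pt) : ℝ := p.2.2.2

/-- `H² × H²`, identified with an open subset of `ℝ⁴`. -/
def HH : Set Pt := {p | 0 < y1 p ∧ 0 < y2 p}

/-- The coordinate `s₁`, determined by `x₁ = s₁ + s₂ ω`, `x₂ = s₁ + s₂ ω'`. -/
def s1 (k : ℕ) (p : Pt) : ℝ := (omg' k * x1 p - omg k * x2 p) / (omg' k - omg k)

/-- The coordinate `s₂`. -/
def s2 (k : ℕ) (p : Pt) : ℝ := (x1 p - x2 p) / (omg k - omg' k)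

/-- The ratio `r = y₁/y₂`. -/
def rr (p : Pt) : ℝ := y1 p / y2 p

/-- The height `h = y₁ y₂`. -/
def hh (p : Pt) : ℝ := y1 p * y2 p

/-- `‖cZ+d‖ = ((cx₁+d)² + c²y₁²)((c'x₂+d')² + c'²y₂²)`, where `c = (c, c')`, `d = (d, d')`
are given by their two real embeddings. -/
def HNorm (c d : ℝ × ℝ) (p : Pt) : ℝ :=
  ((c.1 * x1 p + d.1) ^ 2 + c.1 ^ 2 * y1 p ^ 2) *
    ((c.2 * x2 p + d.2) ^ 2 + c.2 ^ 2 * y2 p ^ 2)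

/-- `S = {(c,d) ∈ R² : cR + dR = R}`. -/
def Spairs (k : ℕ) : Set (R k × R k) := {cd | Ideal.span {cd.1, cd.2} = ⊤}

/-- `V_{c,d}^≥ = {Z ∈ H²×H² : ‖cZ+d‖ ≥ 1}`. -/
def Vge (k : ℕ) (cd : R k × R k) : Set Pt :=
  {p ∈ HH | 1 ≤ HNorm (cd.1 : ℝ × ℝ) (cd.2 : ℝ × ℝ) p}

/-- `V_{c,d}^≤ = {Z ∈ H²×H² : ‖cZ+d‖ ≤ 1}`. -/
def Vle (k : ℕ) (cd : R k × R k) : Set Pt :=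
  {p ∈ HH | HNorm (cd.1 : ℝ × ℝ) (cd.2 : ℝ × ℝ) p ≤ 1}

/-- `V_{c,d} = {Z ∈ H²×H² : ‖cZ+d‖ = 1}`. -/
def Veq (k : ℕ) (cd : R k × R k) : Set Pt :=
  {p ∈ HH | HNorm (cd.1 : ℝ × ℝ) (cd.2 : ℝ × ℝ) p = 1}

/-- `F₀ = {Z ∈ H²×H² : ‖cZ+d‖ ≥ 1 for all (c,d) ∈ S}`. -/
def F0 (k : ℕ) : Set Pt :=
  {p ∈ HH | ∀ cd ∈ Spairs k, 1 ≤ HNorm (cd.1 : ℝ × ℝ) (cd.2 : ℝ × ℝ) p}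

/-- `F_∞ = {(s₁,s₂,r,h) : |s₁| ≤ 1/2, |s₂| ≤ 1/2, ε₀⁻² ≤ r ≤ ε₀²}`, where `ε` stands
for the fundamental unit `ε₀`. -/
def FInf (k : ℕ) (ε : ℝ) : Set Pt :=
  {p ∈ HH | |s1 k p| ≤ 1 / 2 ∧ |s2 k p| ≤ 1 / 2 ∧ (ε ^ 2)⁻¹ ≤ rr p ∧ rr p ≤ ε ^ 2}

/-- `F = F_∞ ∩ F₀`. -/
def F (k : ℕ) (ε : ℝ) : Set Pt := FInf k ε ∩ F0 k

/-- `SL₂(R)`. -/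
abbrev SL (k : ℕ) := Matrix.SpecialLinearGroup (Fin 2) (R k)

/-- Möbius action on the upper half-plane: image of `x + y i` under `(a b; c d)`. -/
def moeb (a b c d x y : ℝ) : ℝ × ℝ :=
  (((a * x + b) * (c * x + d) + a * c * y ^ 2) / ((c * x + d) ^ 2 + c ^ 2 * y ^ 2),
    y / ((c * x + d) ^ 2 + c ^ 2 * y ^ 2))

/-- The action of `γ ∈ SL₂(R)` on `H²×H²`: `γ` acts on the first factor through the first
embedding and through the conjugate matrix `γ'` (second embedding) on the second factor.
This descends to the Hilbert modular group `PSL₂(R)`. -/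
def act (k : ℕ) (g : SL k) (p : Pt) : Pt :=
  ((moeb (g.1 0 0 : ℝ × ℝ).1 (g.1 0 1 : ℝ × ℝ).1 (g.1 1 0 : ℝ × ℝ).1 (g.1 1 1 : ℝ × ℝ).1
      (x1 p) (y1 p)).1,
   (moeb (g.1 0 0 : ℝ × ℝ).2 (g.1 0 1 : ℝ × ℝ).2 (g.1 1 0 : ℝ × ℝ).2 (g.1 1 1 : ℝ × ℝ).2
      (x2 p) (y2 p)).1,
   (moeb (g.1 0 0 : ℝ × ℝ).1 (g.1 0 1 : ℝ × ℝ).1 (g.1 1 0 : ℝ × ℝ).1 (g.1 1 1 : ℝ × ℝ).1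
      (x1 p) (y1 p)).2,
   (moeb (g.1 0 0 : ℝ × ℝ).2 (g.1 0 1 : ℝ × ℝ).2 (g.1 1 0 : ℝ × ℝ).2 (g.1 1 1 : ℝ × ℝ).2
      (x2 p) (y2 p)).2)

/-- The pair of real embeddings of a unit of `R`. -/
def unitVal (k : ℕ) (u : (R k)ˣ) : ℝ × ℝ := ((u : R k) : ℝ × ℝ)

/-- `e` is the fundamental unit of `R`: the smallest unit of `R` greater than `1`
(with respect to the first embedding). -/
def IsFundUnit (k : ℕ) (e : (R k)ˣ) : Prop :=
  1 < (unitVal k e).1 ∧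
    ∀ v : (R k)ˣ, 1 < (unitVal k v).1 → (unitVal k e).1 ≤ (unitVal k v).1

/-- The real number `ε₀ > 1`, the fundamental unit under the first embedding. -/
def eps (k : ℕ) (e : (R k)ˣ) : ℝ := (unitVal k e).1


/-- The norm `N(c) = c c'` of an element of `R` (as a real number). -/
def Nm (k : ℕ) (c : R k) : ℝ := ((c : ℝ × ℝ)).1 * ((c : ℝ × ℝ)).2

/-- A subset `C` of `H²×H²` is hyperbolically bounded if it is bounded in the
Euclidean metric and `y₁, y₂ > ε` on `C` for some `ε > 0`. -/
def HypBounded (C : Set Pt) : Prop :=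
  C ⊆ HH ∧ Bornology.IsBounded C ∧ ∃ ε > (0 : ℝ), ∀ p ∈ C, ε < y1 p ∧ ε < y2 p

/-- `V_{C,μ} = {(c,d) ∈ R × R : ‖cZ+d‖ ≤ μ for some Z ∈ C}`. -/
def VCmu (k : ℕ) (C : Set Pt) (μ : ℝ) : Set (R k × R k) :=
  {cd | ∃ p ∈ C, HNorm (cd.1 : ℝ × ℝ) (cd.2 : ℝ × ℝ) p ≤ μ}

/-- The conditions (8) of Theorem `FiniteSides` on a pair `(c,d) ∈ R²`. -/
def SCond (k : ℕ) (ε : ℝ) (cd : R k × R k) : Prop :=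
  cd.1 ≠ 0 ∧ Ideal.span {cd.1, cd.2} = ⊤ ∧
    |Nm k cd.1| ≤ 2 * k / (k0 k) ^ 2 ∧
    |((cd.2 : ℝ × ℝ)).1 / ((cd.1 : ℝ × ℝ)).1| <
      ε * Real.sqrt (2 * k / (Nm k cd.1 ^ 2 * (k0 k) ^ 2) - (k0 k) ^ 2 / (2 * k)) +
        (1 + omg k) / 2 ∧
    |((cd.2 : ℝ × ℝ)).2 / ((cd.1 : ℝ × ℝ)).2| <
      ε * Real.sqrt (2 * k / (Nm k cd.1 ^ 2 * (k0 k) ^ 2) - (k0 k) ^ 2 / (2 * k)) +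
        (1 - omg' k) / 2

/-- `S₁` is a set of representatives, up to multiplication by units of `R`, of the pairs
`(c,d) ∈ R²` satisfying the conditions `SCond`. -/
def IsRepSet (k : ℕ) (ε : ℝ) (S1 : Set (R k × R k)) : Prop :=
  (∀ cd ∈ S1, SCond k ε cd) ∧
    (∀ cd : R k × R k, SCond k ε cd →
      ∃ ab ∈ S1, ∃ u : (R k)ˣ, cd.1 = (u : R k) * ab.1 ∧ cd.2 = (u : R k) * ab.2) ∧
    (∀ ab ∈ S1, ∀ ab' ∈ S1,
      (∃ u : (R k)ˣ, ab'.1 = (u : R k) * ab.1 ∧ ab'.2 = (u : R k) * ab.2) → ab = ab')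

/-- The family `𝒱_∞ = {V_i^± : i = 1,2,3}`. -/
def VfamInf (k : ℕ) (ε : ℝ) : Set (Set Pt) :=
  { {p ∈ HH | s1 k p = 1 / 2}, {p ∈ HH | s1 k p = -(1 / 2)},
    {p ∈ HH | s2 k p = 1 / 2}, {p ∈ HH | s2 k p = -(1 / 2)},
    {p ∈ HH | rr p = ε ^ 2}, {p ∈ HH | rr p = (ε ^ 2)⁻¹} }

/-- The family `𝒱 = {V_{c,d} : (c,d) ∈ S, c ≠ 0}`. -/
def Vfam (k : ℕ) : Set (Set Pt) :=
  {V | ∃ cd ∈ Spairs k, cd.1 ≠ 0 ∧ V = Veq k cd}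

/-- The family `𝓜 = {γ(M) : γ ∈ Γ, M ∈ 𝒱 ∪ 𝒱_∞}`. -/
def Mfam (k : ℕ) (ε : ℝ) : Set (Set Pt) :=
  {M | ∃ g : SL k, ∃ V ∈ Vfam k ∪ VfamInf k ε, M = act k g '' V}

/-- `ω` as an element of `R`. -/
def omR (k : ℕ) : R k := ⟨(omg k, omg' k), Subring.subset_closure rfl⟩

/-- The side-pairing transformations: `γ ≠ 1` (in `PSL₂(R)`) such that `F ∩ γ⁻¹(F)` has
Hausdorff dimension `3`. -/
def SidePairings (k : ℕ) (ε : ℝ) : Set (SL k) :=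
  {g | g ≠ 1 ∧ g.1 ≠ -1 ∧ dimH (F k ε ∩ act k g⁻¹ '' F k ε) = 3}


/-! ### Auxiliary lemmas for local finiteness -/

section LocFinAux

variable {k : ℕ}

lemma k0_pos (k : ℕ) : 0 < k0 k := by unfold k0; split <;> norm_num

lemma sqrt_gt_one (hk1 : 1 < k) : 1 < Real.sqrt k := by
  have : (1 : ℝ) < (k : ℝ) := by exact_mod_cast hk1
  nlinarith [Real.sq_sqrt (by positivity : (0:ℝ) ≤ (k:ℝ)),
    Real.sqrt_nonneg (k : ℝ)]

lemma omg_pos (hk1 : 1 < k) : 0 < omg k := by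
  have h1 := sqrt_gt_one hk1
  have h2 := k0_pos k
  unfold omg; positivity

lemma abs_omg'_le (hk1 : 1 < k) : |omg' k| ≤ omg k := by
  have h1 := sqrt_gt_one hk1
  have h2 := k0_pos k
  unfold omg omg'
  rw [abs_div, abs_of_pos h2]
  have : |1 - Real.sqrt k| ≤ 1 + Real.sqrt k := by
    rw [abs_le]; constructor <;> nlinarith
  exact (div_le_div_iff_of_pos_right h2).mpr this

lemma omg_sub_omg'_pos (hk1 : 1 < k) : 0 < omg k - omg' k := by
  have h1 := sqrt_gt_one hk1
  have h2 := k0_pos k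
  have : omg k - omg' k = 2 * Real.sqrt k / k0 k := by
    unfold omg omg'; field_simp; ring
  rw [this]; positivity

/-- Trace of `ω` as an integer. -/
def tZ (k : ℕ) : ℤ := if k % 4 = 1 then 1 else 2

/-- Norm of `ω` as an integer. -/
def nZ (k : ℕ) : ℤ := if k % 4 = 1 then ((1 : ℤ) - k) / 4 else 1 - k

lemma tZ_cast (k : ℕ) : ((tZ k : ℝ)) = omg k + omg' k := by
  have hsq : Real.sqrt k ^ 2 = (k : ℝ) := Real.sq_sqrt (by positivity)
  unfold tZ omg omg' k0
  split <;> push_cast <;> ring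

lemma nZ_cast (k : ℕ) : ((nZ k : ℝ)) = omg k * omg' k := by
  have hsq : Real.sqrt k ^ 2 = (k : ℝ) := Real.sq_sqrt (by positivity)
  unfold nZ omg omg' k0
  by_cases h : k % 4 = 1
  · have hdvd : (4 : ℤ) ∣ 1 - (k : ℤ) := by
      have : (k : ℤ) % 4 = 1 := by exact_mod_cast h
      omega
    simp only [h, if_pos, if_true]
    rw [Int.cast_div hdvd (by norm_num)]
    push_cast
    field_simp
    nlinarith [hsq]
  · simp only [h, if_neg, if_false]
    push_cast
    field_simp
    nlinarith [hsq]

/-- Every element of `R k` has the form `m + n ω` (in both embeddings). -/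
lemma exists_int_rep (k : ℕ) (x : R k) :
    ∃ m n : ℤ, (x : ℝ × ℝ).1 = m + n * omg k ∧ (x : ℝ × ℝ).2 = m + n * omg' k := by
  have ht := tZ_cast k
  have hn := nZ_cast k
  obtain ⟨v, hv⟩ := x
  show ∃ m n : ℤ, v.1 = (m : ℝ) + n * omg k ∧ v.2 = (m : ℝ) + n * omg' k
  induction hv using Subring.closure_induction with
  | mem x hx =>
      rcases hx with rfl
      exact ⟨0, 1, by push_cast; simp, by push_cast; simp⟩
  | zero => exact ⟨0, 0, by push_cast; simp, by push_cast; simp⟩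
  | one => exact ⟨1, 0, by push_cast; simp, by push_cast; simp⟩
  | add x y hx hy ihx ihy =>
      obtain ⟨m, n, h1, h2⟩ := ihx
      obtain ⟨p, q, g1, g2⟩ := ihy
      exact ⟨m + p, n + q, by push_cast [Prod.fst_add, h1, g1]; ring,
        by push_cast [Prod.snd_add, h2, g2]; ring⟩
  | neg x hx ihx =>
      obtain ⟨m, n, h1, h2⟩ := ihx
      exact ⟨-m, -n, by push_cast [Prod.fst_neg, h1]; ring,
        by push_cast [Prod.snd_neg, h2]; ring⟩
  | mul x y hx hy ihx ihy =>
      obtain ⟨m, n, h1, h2⟩ := ihx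
      obtain ⟨p, q, g1, g2⟩ := ihy
      refine ⟨m * p - n * q * nZ k, m * q + n * p + n * q * tZ k, ?_, ?_⟩
      · show (x * y).1 = _
        rw [Prod.fst_mul, h1, g1]
        push_cast
        rw [ht, hn]; ring
      · show (x * y).2 = _
        rw [Prod.snd_mul, h2, g2]
        push_cast
        rw [ht, hn]; ring

lemma irrational_omg (hk : Squarefree k) (hk1 : 1 < k) : Irrational (Real.sqrt k) := by
  rw [irrational_sqrt_natCast_iff]
  rintro ⟨r, hr⟩
  have : IsUnit r := hk r (by rw [hr])
  rw [Nat.isUnit_iff] at this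
  rw [this] at hr
  omega

/-- Integer combinations of `1` and `ω` vanish only trivially. -/
lemma int_comb_eq_zero (hk : Squarefree k) (hk1 : 1 < k) (m n : ℤ) {w : ℝ}
    (hw : w = omg k ∨ w = omg' k) (h : (m : ℝ) + n * w = 0) : m = 0 ∧ n = 0 := by
  have hirr : Irrational (Real.sqrt k) := irrational_omg hk hk1
  set c : ℚ := if k % 4 = 1 then (2 : ℚ) else 1 with hcdef
  have hc : ((c : ℚ) : ℝ) = k0 k := by unfold k0; rw [hcdef]; split <;> norm_num
  have hc0 : k0 k ≠ 0 := ne_of_gt (k0_pos k)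
  have hn : n = 0 := by
    by_contra hn
    have hn' : (n : ℝ) ≠ 0 := Int.cast_ne_zero.mpr hn
    rcases hw with rfl | rfl
    · refine hirr ⟨-(((m : ℚ) * c + n) / n), ?_⟩
      unfold omg at h
      push_cast [hc]
      field_simp at h ⊢
      linarith
    · refine hirr ⟨((m : ℚ) * c + n) / n, ?_⟩
      unfold omg' at h
      push_cast [hc]
      field_simp at h ⊢
      linarith
  refine ⟨?_, hn⟩
  rw [hn] at h
  push_cast at h
  have : (m : ℝ) = 0 := by linarith
  exact_mod_cast this

lemma norm_int (k : ℕ) (x : R k) :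
    ∃ M : ℤ, (x : ℝ × ℝ).1 * (x : ℝ × ℝ).2 = (M : ℝ) := by
  obtain ⟨m, n, h1, h2⟩ := exists_int_rep k x
  refine ⟨m ^ 2 + m * n * tZ k + n ^ 2 * nZ k, ?_⟩
  rw [h1, h2]; push_cast; rw [tZ_cast, nZ_cast]; ring

lemma norm_ge_one (hk : Squarefree k) (hk1 : 1 < k) (x : R k) (hx : x ≠ 0) :
    1 ≤ |(x : ℝ × ℝ).1 * (x : ℝ × ℝ).2| := by
  obtain ⟨m, n, h1, h2⟩ := exists_int_rep k x
  obtain ⟨M, hM⟩ := norm_int k x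
  rw [hM]
  have hM0 : M ≠ 0 := by
    rintro rfl
    have h0 : (x : ℝ × ℝ).1 = 0 ∨ (x : ℝ × ℝ).2 = 0 := by
      apply mul_eq_zero.mp; rw [hM]; simp
    have hmn : m = 0 ∧ n = 0 := by
      rcases h0 with h0 | h0
      · exact int_comb_eq_zero hk hk1 m n (w := omg k) (Or.inl rfl) (by rw [← h1, h0])
      · exact int_comb_eq_zero hk hk1 m n (w := omg' k) (Or.inr rfl) (by rw [← h2, h0])
    apply hx
    have hv : (x : ℝ × ℝ) = 0 := by
      apply Prod.ext <;> simp [h1, h2, hmn.1, hmn.2]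
    exact_mod_cast hv
  have : (1 : ℤ) ≤ |M| := Int.one_le_abs hM0
  calc (1 : ℝ) = ((1 : ℤ) : ℝ) := by norm_num
    _ ≤ ((|M| : ℤ) : ℝ) := by exact_mod_cast this
    _ = |((M : ℤ) : ℝ)| := by push_cast; ring

lemma finite_bdd (hk : Squarefree k) (hk1 : 1 < k) (B : ℝ) :
    {x : R k | (x : ℝ × ℝ).1 ^ 2 ≤ B ∧ (x : ℝ × ℝ).2 ^ 2 ≤ B}.Finite := by
  have hom := omg_sub_omg'_pos hk1
  have homg := omg_pos hk1
  set sB := Real.sqrt B with hsB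
  set b1 : ℝ := 2 * sB / (omg k - omg' k) with hb1
  have hb1nn : 0 ≤ b1 := by positivity
  obtain ⟨M, hM⟩ := exists_nat_ge (max b1 (sB + b1 * omg k))
  set Φ : ℤ × ℤ → ℝ × ℝ :=
    fun mn => ((mn.1 : ℝ) + mn.2 * omg k, (mn.1 : ℝ) + mn.2 * omg' k) with hΦ
  have hfin : (Φ '' (Set.Icc (-(M : ℤ)) M ×ˢ Set.Icc (-(M : ℤ)) M)).Finite :=
    ((Set.finite_Icc _ _).prod (Set.finite_Icc _ _)).image Φ
  apply Set.Finite.subset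
    (Set.Finite.preimage (Set.injOn_of_injective Subtype.val_injective) hfin)
  rintro x ⟨hx1, hx2⟩
  obtain ⟨m, n, h1, h2⟩ := exists_int_rep k x
  have habs1 : |(x : ℝ × ℝ).1| ≤ sB := by
    rw [← Real.sqrt_sq_eq_abs]; exact Real.sqrt_le_sqrt hx1
  have habs2 : |(x : ℝ × ℝ).2| ≤ sB := by
    rw [← Real.sqrt_sq_eq_abs]; exact Real.sqrt_le_sqrt hx2
  have hnval : (n : ℝ) * (omg k - omg' k) = (x : ℝ × ℝ).1 - (x : ℝ × ℝ).2 := by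
    rw [h1, h2]; ring
  have hn : |(n : ℝ)| ≤ b1 := by
    rw [hb1, le_div_iff₀ hom]
    calc |(n : ℝ)| * (omg k - omg' k) = |(n : ℝ) * (omg k - omg' k)| := by
          rw [abs_mul, abs_of_pos hom]
      _ = |(x : ℝ × ℝ).1 - (x : ℝ × ℝ).2| := by rw [hnval]
      _ ≤ |(x : ℝ × ℝ).1| + |(x : ℝ × ℝ).2| := abs_sub _ _
      _ ≤ 2 * sB := by linarith
  have hm : |(m : ℝ)| ≤ sB + b1 * omg k := by
    have hmval : (m : ℝ) = (x : ℝ × ℝ).1 - n * omg k := by rw [h1]; ring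
    calc |(m : ℝ)| = |(x : ℝ × ℝ).1 - (n : ℝ) * omg k| := by rw [hmval]
      _ ≤ |(x : ℝ × ℝ).1| + |(n : ℝ) * omg k| := abs_sub _ _
      _ = |(x : ℝ × ℝ).1| + |(n : ℝ)| * omg k := by rw [abs_mul, abs_of_pos homg]
      _ ≤ sB + b1 * omg k := by
          have := mul_le_mul_of_nonneg_right hn (le_of_lt homg)
          linarith
  have hnM : |(n : ℝ)| ≤ (M : ℝ) := le_trans hn (le_trans (le_max_left _ _) hM)
  have hmM : |(m : ℝ)| ≤ (M : ℝ) := le_trans hm (le_trans (le_max_right _ _) hM)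
  have hnZ : n ∈ Set.Icc (-(M : ℤ)) (M : ℤ) := by
    have h := abs_le.mp hnM
    exact ⟨by exact_mod_cast h.1, by exact_mod_cast h.2⟩
  have hmZ : m ∈ Set.Icc (-(M : ℤ)) (M : ℤ) := by
    have h := abs_le.mp hmM
    exact ⟨by exact_mod_cast h.1, by exact_mod_cast h.2⟩
  exact ⟨(m, n), ⟨hmZ, hnZ⟩, Prod.ext h1.symm h2.symm⟩

lemma finite_sl (hk : Squarefree k) (hk1 : 1 < k) (B : ℝ) :
    {g : SL k | ∀ i j, ((g.1 i j : ℝ × ℝ)).1 ^ 2 ≤ B ∧ ((g.1 i j : ℝ × ℝ)).2 ^ 2 ≤ B}.Finite := by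
  have hE := finite_bdd hk hk1 B
  set E := {x : R k | (x : ℝ × ℝ).1 ^ 2 ≤ B ∧ (x : ℝ × ℝ).2 ^ 2 ≤ B} with hEdef
  have hsub : {g : SL k | ∀ i j, ((g.1 i j : ℝ × ℝ)).1 ^ 2 ≤ B ∧ ((g.1 i j : ℝ × ℝ)).2 ^ 2 ≤ B}
      ⊆ (fun g : SL k => (g.1 0 0, g.1 0 1, g.1 1 0, g.1 1 1)) ⁻¹' (E ×ˢ E ×ˢ E ×ˢ E) := by
    intro g hg
    exact ⟨hg 0 0, hg 0 1, hg 1 0, hg 1 1⟩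
  apply Set.Finite.subset _ hsub
  apply Set.Finite.preimage _ (hE.prod (hE.prod (hE.prod hE)))
  apply Set.injOn_of_injective
  intro g h heq
  simp only [Prod.mk.injEq] at heq
  apply Subtype.ext
  apply Matrix.ext
  intro i j
  fin_cases i <;> fin_cases j
  exacts [heq.1, heq.2.1, heq.2.2.1, heq.2.2.2]

/-- A uniform bound for the entries, in terms of the geometric data. -/
def BIG (δ Y X XF ylo yhi : ℝ) : ℝ :=
  (2 * (Y / ylo) + 2 * (yhi / δ / ylo ^ 2) * X ^ 2) +
    (3 * X ^ 2 * (yhi / δ) + 3 * Y ^ 2 * (yhi / δ / ylo ^ 2) * yhi ^ 2 +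
      3 * (2 * (Y / ylo) + 2 * (yhi / δ / ylo ^ 2) * X ^ 2) * XF ^ 2) +
    (yhi / δ / ylo ^ 2) +
    (2 * (yhi / δ) + 2 * (yhi / δ / ylo ^ 2) * XF ^ 2) + yhi / δ + Y / ylo

lemma sq_le_two (u v t : ℝ) (h : t = u - v) : t ^ 2 ≤ 2 * u ^ 2 + 2 * v ^ 2 := by
  subst h; nlinarith [sq_nonneg (u + v)]

lemma sq_le_three (u v w t : ℝ) (h : t = u - v - w) :
    t ^ 2 ≤ 3 * u ^ 2 + 3 * v ^ 2 + 3 * w ^ 2 := by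
  subst h; nlinarith [sq_nonneg (u + v), sq_nonneg (u + w), sq_nonneg (v - w)]

set_option maxHeartbeats 1000000 in
/-- Core real-variable estimate: if a Möbius transformation with determinant one maps a
point with bounded coordinates to a point with bounded coordinates, its entries are
bounded. -/
lemma entry_bounds (a b c d x y xw yw δ Y X XF ylo yhi : ℝ)
    (hdet : a * d - b * c = 1) (hy : 0 < y)
    (hxw : xw = ((a * x + b) * (c * x + d) + a * c * y ^ 2) /
      ((c * x + d) ^ 2 + c ^ 2 * y ^ 2))
    (hyw : yw = y / ((c * x + d) ^ 2 + c ^ 2 * y ^ 2))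
    (hylo : ylo ≤ y) (hyhi : y ≤ yhi) (hylo0 : 0 < ylo)
    (hδ : δ ≤ yw) (hYw : yw ≤ Y) (hδ0 : 0 < δ)
    (hx : x ^ 2 ≤ XF ^ 2) (hxwb : xw ^ 2 ≤ X ^ 2) (hXF : 0 ≤ XF) (hX : 0 ≤ X) :
    a ^ 2 ≤ BIG δ Y X XF ylo yhi ∧ b ^ 2 ≤ BIG δ Y X XF ylo yhi ∧
      c ^ 2 ≤ BIG δ Y X XF ylo yhi ∧ d ^ 2 ≤ BIG δ Y X XF ylo yhi := by
  have hY0 : 0 < Y := lt_of_lt_of_le hδ0 (le_trans hδ hYw)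
  have hyhi0 : 0 < yhi := lt_of_lt_of_le hy hyhi
  set N := (c * x + d) ^ 2 + c ^ 2 * y ^ 2 with hN
  have hNpos : 0 < N := by
    rcases eq_or_ne c 0 with rfl | hc
    · have hd : d ≠ 0 := by intro h; rw [h] at hdet; norm_num at hdet
      have : N = d ^ 2 := by rw [hN]; ring
      rw [this]; positivity
    · have h1 : 0 < c ^ 2 * y ^ 2 := by positivity
      have h2 := sq_nonneg (c * x + d)
      rw [hN]; linarith
  have hyw' : yw * N = y := by rw [hyw]; field_simp
  have hywpos : 0 < yw := lt_of_lt_of_le hδ0 hδ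
  have hK1 : N ≤ yhi / δ := by
    rw [le_div_iff₀ hδ0]
    have := mul_le_mul_of_nonneg_right hδ (le_of_lt hNpos)
    linarith
  have hNge : ylo / Y ≤ N := by
    rw [div_le_iff₀ hY0]
    have := mul_le_mul_of_nonneg_right hYw (le_of_lt hNpos)
    linarith
  have hc2 : c ^ 2 ≤ yhi / δ / ylo ^ 2 := by
    rw [le_div_iff₀ (by positivity : (0:ℝ) < ylo ^ 2)]
    have hcyN : c ^ 2 * y ^ 2 ≤ N := by
      have h2 := sq_nonneg (c * x + d)
      rw [hN]; linarith
    have hyy : ylo ^ 2 ≤ y ^ 2 := pow_le_pow_left₀ (le_of_lt hylo0) hylo 2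
    have := mul_le_mul_of_nonneg_left hyy (sq_nonneg c)
    linarith
  have hcx : (c * x + d) ^ 2 ≤ yhi / δ := by
    have h2 : 0 ≤ c ^ 2 * y ^ 2 := by positivity
    have h3 : (c * x + d) ^ 2 ≤ N := by rw [hN]; linarith
    linarith
  have hd2 : d ^ 2 ≤ 2 * (yhi / δ) + 2 * (yhi / δ / ylo ^ 2) * XF ^ 2 := by
    have h2 : (c * x) ^ 2 ≤ yhi / δ / ylo ^ 2 * XF ^ 2 := by
      rw [mul_pow]
      exact mul_le_mul hc2 hx (sq_nonneg x) (le_trans (sq_nonneg c) hc2)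
    have h5 := sq_le_two (c * x + d) (c * x) d (by ring)
    linarith
  have key : a * N - c * ((a * x + b) * (c * x + d) + a * c * y ^ 2) = c * x + d := by
    rw [hN]; linear_combination (c * x + d) * hdet
  have h1 : a - c * xw = (c * x + d) / N := by
    rw [hxw]
    field_simp
    linear_combination key
  have hM : (a - c * xw) ^ 2 + c ^ 2 * yw ^ 2 = 1 / N := by
    rw [h1, hyw]
    field_simp
    ring
  have hMle : 1 / N ≤ Y / ylo := by
    rw [div_le_div_iff₀ hNpos hylo0]
    have := mul_le_mul_of_nonneg_right hYw (le_of_lt hNpos)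
    linarith
  have ha2 : a ^ 2 ≤ 2 * (Y / ylo) + 2 * (yhi / δ / ylo ^ 2) * X ^ 2 := by
    have h3 : (a - c * xw) ^ 2 ≤ Y / ylo := by
      have h5 : 0 ≤ c ^ 2 * yw ^ 2 := by positivity
      linarith
    have h4 : (c * xw) ^ 2 ≤ yhi / δ / ylo ^ 2 * X ^ 2 := by
      rw [mul_pow]
      exact mul_le_mul hc2 hxwb (sq_nonneg xw) (le_trans (sq_nonneg c) hc2)
    have h5 := sq_le_two (a - c * xw) (-(c * xw)) a (by ring)
    rw [neg_sq] at h5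
    linarith
  have key2 : xw * (c * x + d) - yw * (c * y) = a * x + b := by
    rw [hxw, hyw]
    field_simp
    linear_combination c * y ^ 2 * hdet
  have hb2 : b ^ 2 ≤ 3 * X ^ 2 * (yhi / δ) + 3 * Y ^ 2 * (yhi / δ / ylo ^ 2) * yhi ^ 2 +
      3 * (2 * (Y / ylo) + 2 * (yhi / δ / ylo ^ 2) * X ^ 2) * XF ^ 2 := by
    have hbval : b = xw * (c * x + d) - yw * (c * y) - a * x := by linarith [key2]
    have hu : (xw * (c * x + d)) ^ 2 ≤ X ^ 2 * (yhi / δ) := by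
      rw [mul_pow]
      exact mul_le_mul hxwb hcx (sq_nonneg (c * x + d)) (sq_nonneg X)
    have hyw2 : yw ^ 2 ≤ Y ^ 2 := pow_le_pow_left₀ (le_of_lt hywpos) hYw 2
    have hy2 : y ^ 2 ≤ yhi ^ 2 := pow_le_pow_left₀ (le_of_lt hy) hyhi 2
    have hcy2 : (c * y) ^ 2 ≤ yhi / δ / ylo ^ 2 * yhi ^ 2 := by
      rw [mul_pow]
      exact mul_le_mul hc2 hy2 (sq_nonneg y) (le_trans (sq_nonneg c) hc2)
    have hv : (yw * (c * y)) ^ 2 ≤ Y ^ 2 * (yhi / δ / ylo ^ 2 * yhi ^ 2) := by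
      rw [mul_pow]
      exact mul_le_mul hyw2 hcy2 (sq_nonneg (c * y)) (sq_nonneg Y)
    have hwx : (a * x) ^ 2 ≤ (2 * (Y / ylo) + 2 * (yhi / δ / ylo ^ 2) * X ^ 2) * XF ^ 2 := by
      rw [mul_pow]
      exact mul_le_mul ha2 hx (sq_nonneg x) (le_trans (sq_nonneg a) ha2)
    have h6 := sq_le_three (xw * (c * x + d)) (yw * (c * y)) (a * x) b hbval
    linarith
  have n1 : 0 ≤ 2 * (Y / ylo) + 2 * (yhi / δ / ylo ^ 2) * X ^ 2 := by positivity
  have n2 : 0 ≤ 3 * X ^ 2 * (yhi / δ) + 3 * Y ^ 2 * (yhi / δ / ylo ^ 2) * yhi ^ 2 +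
      3 * (2 * (Y / ylo) + 2 * (yhi / δ / ylo ^ 2) * X ^ 2) * XF ^ 2 := by positivity
  have n3 : 0 ≤ yhi / δ / ylo ^ 2 := by positivity
  have n4 : 0 ≤ 2 * (yhi / δ) + 2 * (yhi / δ / ylo ^ 2) * XF ^ 2 := by positivity
  have n5 : 0 ≤ yhi / δ := by positivity
  have n6 : 0 ≤ Y / ylo := by positivity
  unfold BIG
  refine ⟨by linarith, by linarith, by linarith, by linarith⟩

lemma Npos (a b c d x y : ℝ) (hdet : a * d - b * c = 1) (hy : 0 < y) :
    0 < (c * x + d) ^ 2 + c ^ 2 * y ^ 2 := by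
  rcases eq_or_ne c 0 with rfl | hc
  · have hd : d ≠ 0 := by intro h; rw [h] at hdet; norm_num at hdet
    have h2 := sq_nonneg ((0:ℝ) * x + d)
    have h3 : ((0:ℝ) * x + d) ^ 2 = d ^ 2 := by ring
    nlinarith [sq_pos_of_ne_zero hd]
  · have h1 : 0 < c ^ 2 * y ^ 2 := by positivity
    have h2 := sq_nonneg (c * x + d)
    linarith

lemma N_c_bound (a b c d x y δ : ℝ) (hdet : a * d - b * c = 1) (hy : 0 < y)
    (hδ : δ ≤ y / ((c * x + d) ^ 2 + c ^ 2 * y ^ 2)) (hδ0 : 0 < δ) :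
    ((c * x + d) ^ 2 + c ^ 2 * y ^ 2) * (c ^ 2 * δ ^ 2) ≤ 1 := by
  have hNpos := Npos a b c d x y hdet hy
  set N := (c * x + d) ^ 2 + c ^ 2 * y ^ 2 with hN
  have key : a * N - c * ((a * x + b) * (c * x + d) + a * c * y ^ 2) = c * x + d := by
    rw [hN]; linear_combination (c * x + d) * hdet
  have h1 : a - c * (((a * x + b) * (c * x + d) + a * c * y ^ 2) / N) = (c * x + d) / N := by
    field_simp
    linear_combination key
  have hM : (a - c * (((a * x + b) * (c * x + d) + a * c * y ^ 2) / N)) ^ 2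
      + c ^ 2 * (y / N) ^ 2 = 1 / N := by
    rw [h1]
    field_simp
    ring
  have h5 : c ^ 2 * δ ^ 2 ≤ c ^ 2 * (y / N) ^ 2 :=
    mul_le_mul_of_nonneg_left (pow_le_pow_left₀ (le_of_lt hδ0) hδ 2) (sq_nonneg c)
  have h6 : c ^ 2 * (y / N) ^ 2 ≤ 1 / N := by
    have := sq_nonneg (a - c * (((a * x + b) * (c * x + d) + a * c * y ^ 2) / N))
    linarith
  calc N * (c ^ 2 * δ ^ 2) ≤ N * (1 / N) :=
        mul_le_mul_of_nonneg_left (h5.trans h6) (le_of_lt hNpos)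
    _ = 1 := by field_simp

lemma sqrt_interval {t lo hi : ℝ} (ht : 0 < t) (hlo : 0 < lo)
    (h1 : lo ^ 2 ≤ t ^ 2) (h2 : t ^ 2 ≤ hi ^ 2) (hhi : 0 ≤ hi) : lo ≤ t ∧ t ≤ hi := by
  constructor <;> nlinarith

lemma x_coords_eq (hk1 : 1 < k) (p : Pt) :
    s1 k p + s2 k p * omg k = x1 p ∧ s1 k p + s2 k p * omg' k = x2 p := by
  have hom := omg_sub_omg'_pos hk1
  have h1 : omg' k - omg k ≠ 0 := by intro h; rw [sub_eq_zero] at h; rw [h] at hom; linarith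
  have h2 : omg k - omg' k ≠ 0 := by intro h; rw [sub_eq_zero] at h; rw [h] at hom; linarith
  unfold s1 s2
  constructor <;> field_simp <;> ring

lemma xbound (hk1 : 1 < k) {p : Pt} (h1 : |s1 k p| ≤ 1 / 2) (h2 : |s2 k p| ≤ 1 / 2) :
    x1 p ^ 2 ≤ ((1 + omg k) / 2) ^ 2 ∧ x2 p ^ 2 ≤ ((1 + omg k) / 2) ^ 2 := by
  have hom := omg_pos hk1
  have habs := abs_omg'_le hk1
  obtain ⟨e1, e2⟩ := x_coords_eq hk1 p
  have key : ∀ u : ℝ, |u| ≤ (1 + omg k) / 2 → u ^ 2 ≤ ((1 + omg k) / 2) ^ 2 := by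
    intro u hu
    have := pow_le_pow_left₀ (abs_nonneg u) hu 2
    rwa [sq_abs] at this
  constructor
  · apply key
    rw [← e1]
    calc |s1 k p + s2 k p * omg k| ≤ |s1 k p| + |s2 k p * omg k| := abs_add_le _ _
      _ = |s1 k p| + |s2 k p| * |omg k| := by rw [abs_mul]
      _ ≤ 1 / 2 + 1 / 2 * omg k := by
          rw [abs_of_pos hom]
          have := mul_le_mul_of_nonneg_right h2 (le_of_lt hom)
          linarith
      _ = (1 + omg k) / 2 := by ring
  · apply key
    rw [← e2]
    calc |s1 k p + s2 k p * omg' k| ≤ |s1 k p| + |s2 k p * omg' k| := abs_add_le _ _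
      _ = |s1 k p| + |s2 k p| * |omg' k| := by rw [abs_mul]
      _ ≤ 1 / 2 + 1 / 2 * omg k := by
          have h3 : |s2 k p| * |omg' k| ≤ 1 / 2 * omg k := by
            apply mul_le_mul h2 habs (abs_nonneg _) (by norm_num)
          linarith
      _ = (1 + omg k) / 2 := by ring

lemma det_coords (k : ℕ) (g : SL k) :
    ((g.1 0 0 : ℝ × ℝ)).1 * ((g.1 1 1 : ℝ × ℝ)).1
        - ((g.1 0 1 : ℝ × ℝ)).1 * ((g.1 1 0 : ℝ × ℝ)).1 = 1 ∧
      ((g.1 0 0 : ℝ × ℝ)).2 * ((g.1 1 1 : ℝ × ℝ)).2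
        - ((g.1 0 1 : ℝ × ℝ)).2 * ((g.1 1 0 : ℝ × ℝ)).2 = 1 := by
  have h := g.2
  rw [Matrix.det_fin_two] at h
  have h1 : ((g.1 0 0 * g.1 1 1 - g.1 0 1 * g.1 1 0 : R k) : ℝ × ℝ) = ((1 : R k) : ℝ × ℝ) := by
    rw [h]
  push_cast at h1
  constructor
  · have h2 := congrArg Prod.fst h1
    simpa using h2
  · have h2 := congrArg Prod.snd h1
    simpa using h2

set_option maxHeartbeats 1000000 in
/-- Master estimate: the entries of any `γ ∈ Γ` moving a point of `F_∞` with controlled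
height into the compact region are bounded. -/
lemma master (hk : Squarefree k) (hk1 : 1 < k) (ε δ Y X : ℝ)
    (hε : 1 < ε) (hδ0 : 0 < δ) (hδ1 : δ ≤ 1)
    (g : SL k) (z w : Pt) (hzw : act k g z = w)
    (hz : z ∈ FInf k ε)
    (hwy1 : δ ≤ y1 w) (hwy2 : δ ≤ y2 w) (hwY1 : y1 w ≤ Y) (hwY2 : y2 w ≤ Y)
    (hwx1 : x1 w ^ 2 ≤ X ^ 2) (hwx2 : x2 w ^ 2 ≤ X ^ 2) (hX : 0 ≤ X)
    (hhlo : δ ^ 2 ≤ hh z) (hhhi : hh z ≤ Y ^ 2 / δ ^ 4) :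
    ∀ i j, ((g.1 i j : ℝ × ℝ)).1 ^ 2 ≤ BIG δ Y X ((1 + omg k) / 2) (δ / ε) (ε * Y / δ ^ 2) ∧
      ((g.1 i j : ℝ × ℝ)).2 ^ 2 ≤ BIG δ Y X ((1 + omg k) / 2) (δ / ε) (ε * Y / δ ^ 2) := by
  obtain ⟨⟨hz1, hz2⟩, hs1, hs2, hr1, hr2⟩ := hz
  obtain ⟨hdet1, hdet2⟩ := det_coords k g
  have hε0 : (0:ℝ) < ε := lt_trans one_pos hε
  have hY0 : 0 < Y := lt_of_lt_of_le hδ0 (le_trans hwy1 hwY1)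
  have hylo0 : 0 < δ / ε := by positivity
  have hyhi0 : 0 < ε * Y / δ ^ 2 := by positivity
  have hz2' : y2 z ≠ 0 := ne_of_gt hz2
  -- y-coordinate bounds on z
  have hy1sq : rr z * hh z = y1 z ^ 2 := by unfold rr hh; field_simp
  have hy2sq : y2 z ^ 2 * rr z = hh z := by unfold rr hh; field_simp
  have hrpos : 0 < rr z := by unfold rr; positivity
  have hy1lo : δ / ε ≤ y1 z ∧ y1 z ≤ ε * Y / δ ^ 2 := by
    apply sqrt_interval hz1 hylo0 _ _ (le_of_lt hyhi0)
    · rw [← hy1sq]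
      calc (δ / ε) ^ 2 = (ε ^ 2)⁻¹ * δ ^ 2 := by rw [div_pow, div_eq_inv_mul]
        _ ≤ rr z * hh z :=
          mul_le_mul hr1 hhlo (sq_nonneg δ) (le_trans (by positivity) hr1)
    · rw [← hy1sq]
      calc rr z * hh z ≤ ε ^ 2 * (Y ^ 2 / δ ^ 4) :=
            mul_le_mul hr2 hhhi (le_trans (sq_nonneg δ) hhlo) (by positivity)
        _ = (ε * Y / δ ^ 2) ^ 2 := by field_simp; try ring
  have hy2lo : δ / ε ≤ y2 z ∧ y2 z ≤ ε * Y / δ ^ 2 := by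
    apply sqrt_interval hz2 hylo0 _ _ (le_of_lt hyhi0)
    · have h3 : y2 z ^ 2 * rr z ≤ y2 z ^ 2 * ε ^ 2 :=
        mul_le_mul_of_nonneg_left hr2 (sq_nonneg _)
      rw [hy2sq] at h3
      have h4 : δ ^ 2 ≤ y2 z ^ 2 * ε ^ 2 := le_trans hhlo h3
      calc (δ / ε) ^ 2 = δ ^ 2 / ε ^ 2 := by rw [div_pow]
        _ ≤ y2 z ^ 2 := by rw [div_le_iff₀ (by positivity)]; linarith
    · have h3 : y2 z ^ 2 * (ε ^ 2)⁻¹ ≤ y2 z ^ 2 * rr z :=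
        mul_le_mul_of_nonneg_left hr1 (sq_nonneg _)
      rw [hy2sq] at h3
      have h4 : y2 z ^ 2 * (ε ^ 2)⁻¹ ≤ Y ^ 2 / δ ^ 4 := le_trans h3 hhhi
      calc y2 z ^ 2 = y2 z ^ 2 * (ε ^ 2)⁻¹ * ε ^ 2 := by field_simp
        _ ≤ Y ^ 2 / δ ^ 4 * ε ^ 2 := mul_le_mul_of_nonneg_right h4 (by positivity)
        _ = (ε * Y / δ ^ 2) ^ 2 := by field_simp; try ring
  -- x-coordinate bounds on z
  obtain ⟨hx1z, hx2z⟩ := xbound hk1 hs1 hs2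
  have hXF0 : (0:ℝ) ≤ (1 + omg k) / 2 := by
    have := omg_pos hk1; linarith
  -- entries
  set a1 := ((g.1 0 0 : ℝ × ℝ)).1 with ha1def
  set b1 := ((g.1 0 1 : ℝ × ℝ)).1 with hb1def
  set c1 := ((g.1 1 0 : ℝ × ℝ)).1 with hc1def
  set d1 := ((g.1 1 1 : ℝ × ℝ)).1 with hd1def
  set a2 := ((g.1 0 0 : ℝ × ℝ)).2 with ha2def
  set b2 := ((g.1 0 1 : ℝ × ℝ)).2 with hb2def
  set c2 := ((g.1 1 0 : ℝ × ℝ)).2 with hc2def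
  set d2 := ((g.1 1 1 : ℝ × ℝ)).2 with hd2def
  -- Möbius coordinates
  have e1 : x1 w = ((a1 * x1 z + b1) * (c1 * x1 z + d1) + a1 * c1 * y1 z ^ 2)
      / ((c1 * x1 z + d1) ^ 2 + c1 ^ 2 * y1 z ^ 2) := by
    rw [← hzw]; rfl
  have e2 : y1 w = y1 z / ((c1 * x1 z + d1) ^ 2 + c1 ^ 2 * y1 z ^ 2) := by
    rw [← hzw]; rfl
  have e3 : x2 w = ((a2 * x2 z + b2) * (c2 * x2 z + d2) + a2 * c2 * y2 z ^ 2)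
      / ((c2 * x2 z + d2) ^ 2 + c2 ^ 2 * y2 z ^ 2) := by
    rw [← hzw]; rfl
  have e4 : y2 w = y2 z / ((c2 * x2 z + d2) ^ 2 + c2 ^ 2 * y2 z ^ 2) := by
    rw [← hzw]; rfl
  obtain ⟨hA1, hB1, hC1, hD1⟩ :=
    entry_bounds a1 b1 c1 d1 (x1 z) (y1 z) (x1 w) (y1 w) δ Y X ((1 + omg k) / 2)
      (δ / ε) (ε * Y / δ ^ 2) hdet1 hz1 e1 e2 hy1lo.1 hy1lo.2 hylo0 hwy1 hwY1 hδ0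
      hx1z hwx1 hXF0 hX
  obtain ⟨hA2, hB2, hC2, hD2⟩ :=
    entry_bounds a2 b2 c2 d2 (x2 z) (y2 z) (x2 w) (y2 w) δ Y X ((1 + omg k) / 2)
      (δ / ε) (ε * Y / δ ^ 2) hdet2 hz2 e3 e4 hy2lo.1 hy2lo.2 hylo0 hwy2 hwY2 hδ0
      hx2z hwx2 hXF0 hX
  intro i j
  fin_cases i <;> fin_cases j
  · exact ⟨hA1, hA2⟩
  · exact ⟨hB1, hB2⟩
  · exact ⟨hC1, hC2⟩
  · exact ⟨hD1, hD2⟩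

end LocFinAux

set_option maxHeartbeats 4000000 in
/-- The fundamental domains `F` and `F_∞` are locally finite: for every
compact subset `C` of `H²×H²` the set `{γ ∈ Γ : C ∩ γ(F) ≠ ∅}` is finite, and the set
`{γ ∈ Γ_∞ : C ∩ γ(F_∞) ≠ ∅}` is finite. -/
theorem F_locallyFinite (k : ℕ) (hk : Squarefree k) (hk1 : 1 < k)
    (e : (R k)ˣ) (he : IsFundUnit k e)
    (C : Set Pt) (hC : C ⊆ HH) (hCc : IsCompact C) :
    {g : SL k | (C ∩ act k g '' F k (eps k e)).Nonempty}.Finite ∧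
    {g : SL k | g.1 1 0 = 0 ∧ (C ∩ act k g '' FInf k (eps k e)).Nonempty}.Finite := by
  rcases Set.eq_empty_or_nonempty C with rfl | hCne
  · constructor
    · apply Set.Finite.subset Set.finite_empty
      intro g hg
      simp only [Set.mem_setOf_eq, Set.empty_inter] at hg
      exact absurd hg (by simp)
    · apply Set.Finite.subset Set.finite_empty
      intro g hg
      simp only [Set.mem_setOf_eq, Set.empty_inter] at hg
      exact absurd hg.2 (by simp)
  set ε := eps k e with hεdef
  have hε : 1 < ε := he.1
  have hε0 : (0:ℝ) < ε := lt_trans one_pos hε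
  -- lower bound on the y-coordinates over C
  have hcont : Continuous fun p : Pt => min (y1 p) (y2 p) :=
    Continuous.min (continuous_fst.comp (continuous_snd.comp continuous_snd))
      (continuous_snd.comp (continuous_snd.comp continuous_snd))
  obtain ⟨pm, hpmC, hpm'⟩ := hCc.exists_isMinOn hCne hcont.continuousOn
  have hpm : ∀ p ∈ C, min (y1 pm) (y2 pm) ≤ min (y1 p) (y2 p) := fun p hp => hpm' hp
  obtain ⟨hpm1, hpm2⟩ := hC hpmC
  set δ := min (min (y1 pm) (y2 pm)) 1 with hδdef
  have hδ0 : 0 < δ := lt_min (lt_min hpm1 hpm2) one_pos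
  have hδ1 : δ ≤ 1 := min_le_right _ _
  have hδy : ∀ p ∈ C, δ ≤ y1 p ∧ δ ≤ y2 p := by
    intro p hp
    have h := hpm p hp
    exact ⟨le_trans (min_le_left _ _) (le_trans h (min_le_left _ _)),
      le_trans (min_le_left _ _) (le_trans h (min_le_right _ _))⟩
  -- upper bounds over C
  obtain ⟨pM, hpMC, hpM'⟩ := hCc.exists_isMaxOn hCne continuous_norm.continuousOn
  have hpM : ∀ p ∈ C, ‖p‖ ≤ ‖pM‖ := fun p hp => hpM' hp
  set Y := ‖pM‖ + 1 with hYdef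
  have hYpos : (0:ℝ) < Y := by
    have := norm_nonneg pM; rw [hYdef]; linarith
  have hYb : ∀ p ∈ C, y1 p ≤ Y ∧ y2 p ≤ Y ∧ x1 p ^ 2 ≤ Y ^ 2 ∧ x2 p ^ 2 ≤ Y ^ 2 := by
    intro p hp
    have h := hpM p hp
    have c1 : |x1 p| ≤ Y := by
      rw [← Real.norm_eq_abs]
      calc ‖x1 p‖ ≤ ‖p‖ := norm_fst_le p
        _ ≤ ‖pM‖ := h
        _ ≤ Y := by rw [hYdef]; linarith
    have c2 : |x2 p| ≤ Y := by
      rw [← Real.norm_eq_abs]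
      calc ‖x2 p‖ ≤ ‖p.2‖ := norm_fst_le p.2
        _ ≤ ‖p‖ := norm_snd_le p
        _ ≤ ‖pM‖ := h
        _ ≤ Y := by rw [hYdef]; linarith
    have c3 : |y1 p| ≤ Y := by
      rw [← Real.norm_eq_abs]
      calc ‖y1 p‖ ≤ ‖p.2.2‖ := norm_fst_le p.2.2
        _ ≤ ‖p.2‖ := norm_snd_le p.2
        _ ≤ ‖p‖ := norm_snd_le p
        _ ≤ ‖pM‖ := h
        _ ≤ Y := by rw [hYdef]; linarith
    have c4 : |y2 p| ≤ Y := by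
      rw [← Real.norm_eq_abs]
      calc ‖y2 p‖ ≤ ‖p.2.2‖ := norm_snd_le p.2.2
        _ ≤ ‖p.2‖ := norm_snd_le p.2
        _ ≤ ‖p‖ := norm_snd_le p
        _ ≤ ‖pM‖ := h
        _ ≤ Y := by rw [hYdef]; linarith
    have sq1 : x1 p ^ 2 ≤ Y ^ 2 := by
      have := pow_le_pow_left₀ (abs_nonneg (x1 p)) c1 2
      rwa [sq_abs] at this
    have sq2 : x2 p ^ 2 ≤ Y ^ 2 := by
      have := pow_le_pow_left₀ (abs_nonneg (x2 p)) c2 2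
      rwa [sq_abs] at this
    exact ⟨le_trans (le_abs_self _) c3, le_trans (le_abs_self _) c4, sq1, sq2⟩
  have hδ2' : δ ^ 2 ≤ 1 := by
    calc δ ^ 2 = δ * δ := pow_two δ
      _ ≤ 1 * 1 := mul_le_mul hδ1 hδ1 (le_of_lt hδ0) zero_le_one
      _ = 1 := one_mul 1
  have hδ4 : δ ^ 4 ≤ 1 := by
    calc δ ^ 4 = δ ^ 2 * δ ^ 2 := by ring
      _ ≤ 1 * 1 := mul_le_mul hδ2' hδ2' (sq_nonneg δ) zero_le_one
      _ = 1 := one_mul 1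
  have hY2div : Y ^ 2 ≤ Y ^ 2 / δ ^ 4 := by
    rw [le_div_iff₀ (by positivity)]
    have := mul_le_mul_of_nonneg_left hδ4 (sq_nonneg Y)
    linarith
  constructor
  -- Part 1: the fundamental domain F
  · apply Set.Finite.subset
      (finite_sl hk hk1 (BIG δ Y Y ((1 + omg k) / 2) (δ / ε) (ε * Y / δ ^ 2)))
    rintro g ⟨w, hwC, z, hzF, hzw⟩
    obtain ⟨hzInf, hzF0⟩ := hzF
    have hz1 : 0 < y1 z := hzInf.1.1
    have hz2 : 0 < y2 z := hzInf.1.2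
    obtain ⟨hdet1, hdet2⟩ := det_coords k g
    obtain ⟨hwy1, hwy2⟩ := hδy w hwC
    obtain ⟨hwY1, hwY2, hwx1, hwx2⟩ := hYb w hwC
    set N1 := (((g.1 1 0 : ℝ × ℝ)).1 * x1 z + ((g.1 1 1 : ℝ × ℝ)).1) ^ 2
        + ((g.1 1 0 : ℝ × ℝ)).1 ^ 2 * y1 z ^ 2 with hN1def
    set N2 := (((g.1 1 0 : ℝ × ℝ)).2 * x2 z + ((g.1 1 1 : ℝ × ℝ)).2) ^ 2
        + ((g.1 1 0 : ℝ × ℝ)).2 ^ 2 * y2 z ^ 2 with hN2def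
    have e2 : y1 w = y1 z / N1 := by rw [← hzw]; rfl
    have e4 : y2 w = y2 z / N2 := by rw [← hzw]; rfl
    have hN1pos : 0 < N1 :=
      Npos _ ((g.1 0 1 : ℝ × ℝ)).1 _ _ (x1 z) (y1 z) hdet1 hz1
    have hN2pos : 0 < N2 :=
      Npos _ ((g.1 0 1 : ℝ × ℝ)).2 _ _ (x2 z) (y2 z) hdet2 hz2
    have hhzw : hh w * (N1 * N2) = hh z := by
      unfold hh
      rw [e2, e4]
      field_simp
      try ring
    have hhw1 : δ ^ 2 ≤ hh w := by
      have h5 := mul_le_mul hwy1 hwy2 (le_of_lt hδ0) (le_trans (le_of_lt hδ0) hwy1)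
      unfold hh; rw [pow_two]; exact h5
    have hhw2 : hh w ≤ Y ^ 2 := by
      have h0 : 0 ≤ y2 w := le_trans (le_of_lt hδ0) hwy2
      have h5 := mul_le_mul hwY1 hwY2 h0 (le_of_lt hYpos)
      unfold hh; rw [pow_two]; exact h5
    have hspan : (g.1 1 0, g.1 1 1) ∈ Spairs k := by
      show Ideal.span _ = ⊤
      rw [Ideal.eq_top_iff_one]
      refine Ideal.mem_span_pair.mpr ⟨-(g.1 0 1), g.1 0 0, ?_⟩
      have hdet := g.2
      rw [Matrix.det_fin_two] at hdet
      linear_combination hdet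
    have hN12 : 1 ≤ N1 * N2 := by
      have h := hzF0.2 (g.1 1 0, g.1 1 1) hspan
      rw [hN1def, hN2def]
      simpa [HNorm] using h
    have hhlo : δ ^ 2 ≤ hh z := by
      have h1 : hh w ≤ hh w * (N1 * N2) :=
        le_mul_of_one_le_right (le_trans (sq_nonneg δ) hhw1) hN12
      rw [hhzw] at h1
      linarith
    have hhhi : hh z ≤ Y ^ 2 / δ ^ 4 := by
      rcases eq_or_ne (g.1 1 0) 0 with hc0 | hc0
      · -- upper-triangular case
        have hc1 : ((g.1 1 0 : ℝ × ℝ)).1 = 0 := by rw [hc0]; rfl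
        have hc2 : ((g.1 1 0 : ℝ × ℝ)).2 = 0 := by rw [hc0]; rfl
        have h1 : ((g.1 0 0 : ℝ × ℝ)).1 * ((g.1 1 1 : ℝ × ℝ)).1 = 1 := by
          rw [hc1, mul_zero, sub_zero] at hdet1; exact hdet1
        have h2 : ((g.1 0 0 : ℝ × ℝ)).2 * ((g.1 1 1 : ℝ × ℝ)).2 = 1 := by
          rw [hc2, mul_zero, sub_zero] at hdet2; exact hdet2
        obtain ⟨Ma, hMa⟩ := norm_int k (g.1 0 0)
        obtain ⟨Md, hMd⟩ := norm_int k (g.1 1 1)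
        have hprod : (Ma : ℝ) * (Md : ℝ) = 1 := by
          rw [← hMa, ← hMd]
          calc ((g.1 0 0 : ℝ × ℝ)).1 * ((g.1 0 0 : ℝ × ℝ)).2
                * (((g.1 1 1 : ℝ × ℝ)).1 * ((g.1 1 1 : ℝ × ℝ)).2)
              = (((g.1 0 0 : ℝ × ℝ)).1 * ((g.1 1 1 : ℝ × ℝ)).1)
                * (((g.1 0 0 : ℝ × ℝ)).2 * ((g.1 1 1 : ℝ × ℝ)).2) := by ring
            _ = 1 := by rw [h1, h2]; ring
        have hint : Ma * Md = 1 := by exact_mod_cast hprod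
        have hMdu : Md = 1 ∨ Md = -1 :=
          Int.isUnit_iff.mp (IsUnit.of_mul_eq_one Ma (by rw [mul_comm]; exact hint))
        have hMdsq : ((Md : ℝ)) ^ 2 = 1 := by
          rcases hMdu with h | h <;> rw [h] <;> norm_num
        have hN12eq : N1 * N2 = 1 := by
          rw [hN1def, hN2def, hc1, hc2]
          have h9 : (((g.1 1 1 : ℝ × ℝ)).1 * ((g.1 1 1 : ℝ × ℝ)).2) ^ 2 = 1 := by
            rw [hMd]; exact hMdsq
          linear_combination h9
        rw [hN12eq, mul_one] at hhzw
        rw [← hhzw]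
        exact le_trans hhw2 hY2div
      · -- lower row nonzero
        have hnc := norm_ge_one hk hk1 (g.1 1 0) hc0
        have hδ1' : δ ≤ y1 z / N1 := by rw [← e2]; exact hwy1
        have hδ2' : δ ≤ y2 z / N2 := by rw [← e4]; exact hwy2
        have h1 : N1 * (((g.1 1 0 : ℝ × ℝ)).1 ^ 2 * δ ^ 2) ≤ 1 :=
          N_c_bound _ ((g.1 0 1 : ℝ × ℝ)).1 _ _ (x1 z) (y1 z) δ hdet1 hz1 hδ1' hδ0
        have h2 : N2 * (((g.1 1 0 : ℝ × ℝ)).2 ^ 2 * δ ^ 2) ≤ 1 :=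
          N_c_bound _ ((g.1 0 1 : ℝ × ℝ)).2 _ _ (x2 z) (y2 z) δ hdet2 hz2 hδ2' hδ0
        have hc12 : 1 ≤ (((g.1 1 0 : ℝ × ℝ)).1 * ((g.1 1 0 : ℝ × ℝ)).2) ^ 2 := by
          have h := mul_le_mul hnc hnc zero_le_one (abs_nonneg _)
          rw [one_mul] at h
          calc (1:ℝ) ≤ |((g.1 1 0 : ℝ × ℝ)).1 * ((g.1 1 0 : ℝ × ℝ)).2|
                * |((g.1 1 0 : ℝ × ℝ)).1 * ((g.1 1 0 : ℝ × ℝ)).2| := h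
            _ = (((g.1 1 0 : ℝ × ℝ)).1 * ((g.1 1 0 : ℝ × ℝ)).2) ^ 2 := by
                rw [abs_mul_abs_self]; exact (pow_two _).symm
        have q1 : 0 ≤ N1 * N2 * δ ^ 4 := by positivity
        have q2 : (N1 * (((g.1 1 0 : ℝ × ℝ)).1 ^ 2 * δ ^ 2))
            * (N2 * (((g.1 1 0 : ℝ × ℝ)).2 ^ 2 * δ ^ 2)) ≤ 1 := by
          have hnn : 0 ≤ N2 * (((g.1 1 0 : ℝ × ℝ)).2 ^ 2 * δ ^ 2) :=
            mul_nonneg (le_of_lt hN2pos) (by positivity)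
          calc (N1 * (((g.1 1 0 : ℝ × ℝ)).1 ^ 2 * δ ^ 2))
                * (N2 * (((g.1 1 0 : ℝ × ℝ)).2 ^ 2 * δ ^ 2)) ≤ 1 * 1 :=
              mul_le_mul h1 h2 hnn zero_le_one
            _ = 1 := one_mul 1
        have q3 : N1 * N2 * δ ^ 4 * ((((g.1 1 0 : ℝ × ℝ)).1 * ((g.1 1 0 : ℝ × ℝ)).2) ^ 2)
            = (N1 * (((g.1 1 0 : ℝ × ℝ)).1 ^ 2 * δ ^ 2))
              * (N2 * (((g.1 1 0 : ℝ × ℝ)).2 ^ 2 * δ ^ 2)) := by ring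
        have hNN : N1 * N2 * δ ^ 4 ≤ 1 := by
          calc N1 * N2 * δ ^ 4
              ≤ N1 * N2 * δ ^ 4 * ((((g.1 1 0 : ℝ × ℝ)).1 * ((g.1 1 0 : ℝ × ℝ)).2) ^ 2) :=
                le_mul_of_one_le_right q1 hc12
            _ ≤ 1 := by rw [q3]; exact q2
        rw [le_div_iff₀ (by positivity : (0:ℝ) < δ ^ 4)]
        calc hh z * δ ^ 4 = hh w * (N1 * N2 * δ ^ 4) := by rw [← hhzw]; ring
          _ ≤ Y ^ 2 * 1 := mul_le_mul hhw2 hNN q1 (sq_nonneg Y)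
          _ = Y ^ 2 := mul_one _
    exact master hk hk1 ε δ Y Y hε hδ0 hδ1 g z w hzw hzInf hwy1 hwy2 hwY1 hwY2
      hwx1 hwx2 (le_of_lt hYpos) hhlo hhhi
  -- Part 2: the cusp group and F∞
  · apply Set.Finite.subset
      (finite_sl hk hk1 (BIG δ Y Y ((1 + omg k) / 2) (δ / ε) (ε * Y / δ ^ 2)))
    rintro g ⟨hc0, w, hwC, z, hzInf, hzw⟩
    have hz1 : 0 < y1 z := hzInf.1.1
    have hz2 : 0 < y2 z := hzInf.1.2
    obtain ⟨hdet1, hdet2⟩ := det_coords k g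
    obtain ⟨hwy1, hwy2⟩ := hδy w hwC
    obtain ⟨hwY1, hwY2, hwx1, hwx2⟩ := hYb w hwC
    set N1 := (((g.1 1 0 : ℝ × ℝ)).1 * x1 z + ((g.1 1 1 : ℝ × ℝ)).1) ^ 2
        + ((g.1 1 0 : ℝ × ℝ)).1 ^ 2 * y1 z ^ 2 with hN1def
    set N2 := (((g.1 1 0 : ℝ × ℝ)).2 * x2 z + ((g.1 1 1 : ℝ × ℝ)).2) ^ 2
        + ((g.1 1 0 : ℝ × ℝ)).2 ^ 2 * y2 z ^ 2 with hN2def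
    have e2 : y1 w = y1 z / N1 := by rw [← hzw]; rfl
    have e4 : y2 w = y2 z / N2 := by rw [← hzw]; rfl
    have hN1pos : 0 < N1 :=
      Npos _ ((g.1 0 1 : ℝ × ℝ)).1 _ _ (x1 z) (y1 z) hdet1 hz1
    have hN2pos : 0 < N2 :=
      Npos _ ((g.1 0 1 : ℝ × ℝ)).2 _ _ (x2 z) (y2 z) hdet2 hz2
    have hhzw : hh w * (N1 * N2) = hh z := by
      unfold hh
      rw [e2, e4]
      field_simp
      try ring
    have hhw1 : δ ^ 2 ≤ hh w := by
      have h5 := mul_le_mul hwy1 hwy2 (le_of_lt hδ0) (le_trans (le_of_lt hδ0) hwy1)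
      unfold hh; rw [pow_two]; exact h5
    have hhw2 : hh w ≤ Y ^ 2 := by
      have h0 : 0 ≤ y2 w := le_trans (le_of_lt hδ0) hwy2
      have h5 := mul_le_mul hwY1 hwY2 h0 (le_of_lt hYpos)
      unfold hh; rw [pow_two]; exact h5
    have hc1 : ((g.1 1 0 : ℝ × ℝ)).1 = 0 := by rw [hc0]; rfl
    have hc2 : ((g.1 1 0 : ℝ × ℝ)).2 = 0 := by rw [hc0]; rfl
    have h1 : ((g.1 0 0 : ℝ × ℝ)).1 * ((g.1 1 1 : ℝ × ℝ)).1 = 1 := by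
      rw [hc1, mul_zero, sub_zero] at hdet1; exact hdet1
    have h2 : ((g.1 0 0 : ℝ × ℝ)).2 * ((g.1 1 1 : ℝ × ℝ)).2 = 1 := by
      rw [hc2, mul_zero, sub_zero] at hdet2; exact hdet2
    obtain ⟨Ma, hMa⟩ := norm_int k (g.1 0 0)
    obtain ⟨Md, hMd⟩ := norm_int k (g.1 1 1)
    have hprod : (Ma : ℝ) * (Md : ℝ) = 1 := by
      rw [← hMa, ← hMd]
      calc ((g.1 0 0 : ℝ × ℝ)).1 * ((g.1 0 0 : ℝ × ℝ)).2
            * (((g.1 1 1 : ℝ × ℝ)).1 * ((g.1 1 1 : ℝ × ℝ)).2)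
          = (((g.1 0 0 : ℝ × ℝ)).1 * ((g.1 1 1 : ℝ × ℝ)).1)
            * (((g.1 0 0 : ℝ × ℝ)).2 * ((g.1 1 1 : ℝ × ℝ)).2) := by ring
        _ = 1 := by rw [h1, h2]; ring
    have hint : Ma * Md = 1 := by exact_mod_cast hprod
    have hMdu : Md = 1 ∨ Md = -1 :=
      Int.isUnit_iff.mp (IsUnit.of_mul_eq_one Ma (by rw [mul_comm]; exact hint))
    have hMdsq : ((Md : ℝ)) ^ 2 = 1 := by
      rcases hMdu with h | h <;> rw [h] <;> norm_num
    have hN12eq : N1 * N2 = 1 := by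
      rw [hN1def, hN2def, hc1, hc2]
      have h9 : (((g.1 1 1 : ℝ × ℝ)).1 * ((g.1 1 1 : ℝ × ℝ)).2) ^ 2 = 1 := by
        rw [hMd]; exact hMdsq
      linear_combination h9
    rw [hN12eq, mul_one] at hhzw
    have hhlo : δ ^ 2 ≤ hh z := by rw [← hhzw]; exact hhw1
    have hhhi : hh z ≤ Y ^ 2 / δ ^ 4 := by
      rw [← hhzw]; exact le_trans hhw2 hY2div
    exact master hk hk1 ε δ Y Y hε hδ0 hδ1 g z w hzw hzInf hwy1 hwy2 hwY1 hwY2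
      hwx1 hwx2 (le_of_lt hYpos) hhlo hhhi

end Hilbert
end
end

section
/- Let (c₁,d₁), (c₂,d₂) ∈ S. Then V_{c₁,d₁} = V_{c₂,d₂} if and only if (c₂,d₂) = (u·c₁, u·d₁) for some unit u of R. Moreover, if c₁d₂ = c₂d₁ and N(c₁)² ≠ N(c₂)², then V_{c₁,d₁} ∩ V_{c₂,d₂} = ∅. -/
noncomputable section

open scoped Classical
open MeasureTheory

namespace Hilbert

/-! ### Auxiliary lemmas -/

lemma trace_norm (k : ℕ) : ∃ T N0 : ℤ, omg k + omg' k = (T:ℝ) ∧ omg k * omg' k = (N0:ℝ) := by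
  have hsq : Real.sqrt k ^ 2 = (k:ℝ) := Real.sq_sqrt (Nat.cast_nonneg k)
  by_cases h : k % 4 = 1
  · have hk0 : k0 k = 2 := if_pos h
    obtain ⟨m, hm⟩ : ∃ m : ℕ, k = 4 * m + 1 := ⟨k/4, by omega⟩
    have hk4 : (k : ℝ) = 4 * (m : ℝ) + 1 := by exact_mod_cast congrArg (Nat.cast : ℕ → ℝ) hm
    refine ⟨1, -(m : ℤ), ?_, ?_⟩
    · rw [omg, omg', hk0]; push_cast; ring
    · rw [omg, omg', hk0]; push_cast
      linear_combination (-1/4 : ℝ) * hsq - (1/4 : ℝ) * hk4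
  · have hk0 : k0 k = 1 := if_neg h
    refine ⟨2, 1 - (k:ℤ), ?_, ?_⟩
    · rw [omg, omg', hk0]; push_cast; ring
    · rw [omg, omg', hk0]; push_cast
      linear_combination -hsq

lemma mem_rep (k : ℕ) (z : ℝ × ℝ) (hz : z ∈ R k) :
    ∃ p q : ℤ, z = ((p:ℝ) + q * omg k, (p:ℝ) + q * omg' k) := by
  obtain ⟨T, N0, hT, hN⟩ := trace_norm k
  have hw2 : omg k ^ 2 = T * omg k - N0 := by linear_combination omg k * hT - hN
  have hw2' : omg' k ^ 2 = T * omg' k - N0 := by linear_combination omg' k * hT - hN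
  induction hz using Subring.closure_induction with
  | mem x hx =>
    rcases hx with rfl
    exact ⟨0, 1, by push_cast; simp⟩
  | one => exact ⟨1, 0, by push_cast; simp; rfl⟩
  | zero => exact ⟨0, 0, by push_cast; simp; rfl⟩
  | add x y _ _ hx hy =>
    obtain ⟨p, q, rfl⟩ := hx
    obtain ⟨p', q', rfl⟩ := hy
    exact ⟨p + p', q + q', by simp [Prod.ext_iff]; constructor <;> (push_cast; ring)⟩
  | neg x _ hx =>
    obtain ⟨p, q, rfl⟩ := hx
    exact ⟨-p, -q, by simp [Prod.ext_iff]; constructor <;> (push_cast; ring)⟩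
  | mul x y _ _ hx hy =>
    obtain ⟨p, q, rfl⟩ := hx
    obtain ⟨p', q', rfl⟩ := hy
    refine ⟨p * p' - q * q' * N0, p * q' + q * p' + q * q' * T, ?_⟩
    simp only [Prod.ext_iff, Prod.mk_mul_mk]
    constructor
    · push_cast; linear_combination ((q:ℝ) * (q':ℝ)) * hw2
    · push_cast; linear_combination ((q:ℝ) * (q':ℝ)) * hw2'

lemma omg_irrational (k : ℕ) (hk : Squarefree k) (hk1 : 1 < k) :
    Irrational (omg k) ∧ Irrational (omg' k) := by
  have hs : Irrational (Real.sqrt k) := by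
    rw [irrational_sqrt_natCast_iff]
    rintro ⟨m, rfl⟩
    have := hk m ⟨1, by ring⟩
    rw [Nat.isUnit_iff] at this
    subst this; omega
  have h2 : k0 k = 2 ∨ k0 k = 1 := by
    unfold k0; split_ifs <;> simp
  constructor
  · unfold omg
    rcases h2 with h | h <;> rw [h]
    · simpa using (hs.ratCast_add 1).div_ratCast (q := 2) (by norm_num)
    · simpa using (hs.ratCast_add 1).div_ratCast (q := 1) (by norm_num)
  · unfold omg'
    rcases h2 with h | h <;> rw [h]
    · simpa [sub_eq_add_neg] using (hs.neg.ratCast_add 1).div_ratCast (q := 2) (by norm_num)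
    · simpa [sub_eq_add_neg] using (hs.neg.ratCast_add 1).div_ratCast (q := 1) (by norm_num)

lemma intcomb_ne_zero (x : ℝ) (hx : Irrational x) (p q : ℤ) (h : ¬(p = 0 ∧ q = 0)) :
    (p : ℝ) + q * x ≠ 0 := by
  intro h0
  by_cases hq : q = 0
  · subst hq
    simp at h0
    exact h ⟨by exact_mod_cast h0, rfl⟩
  · apply hx
    refine ⟨(-p : ℚ) / (q : ℚ), ?_⟩
    have hqR : (q : ℝ) ≠ 0 := Int.cast_ne_zero.mpr hq
    push_cast
    field_simp
    linarith

lemma comp_ne_zero (k : ℕ) (hk : Squarefree k) (hk1 : 1 < k) (z : R k) (hz : z ≠ 0) :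
    ((z : ℝ × ℝ)).1 ≠ 0 ∧ ((z : ℝ × ℝ)).2 ≠ 0 := by
  obtain ⟨hw, hw'⟩ := omg_irrational k hk hk1
  obtain ⟨p, q, hpq⟩ := mem_rep k (z : ℝ × ℝ) z.2
  have hne : ¬(p = 0 ∧ q = 0) := by
    rintro ⟨rfl, rfl⟩
    apply hz
    apply Subtype.ext
    rw [hpq]; simp
  rw [hpq]
  exact ⟨intcomb_ne_zero _ hw p q hne, intcomb_ne_zero _ hw' p q hne⟩

lemma Nm_int (k : ℕ) (z : R k) : ∃ m : ℤ, Nm k z = (m : ℝ) := by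
  obtain ⟨T, N0, hT, hN⟩ := trace_norm k
  obtain ⟨p, q, hpq⟩ := mem_rep k (z : ℝ × ℝ) z.2
  refine ⟨p^2 + p*q*T + q^2*N0, ?_⟩
  rw [Nm, hpq]
  push_cast
  linear_combination ((p:ℝ)*(q:ℝ)) * hT + ((q:ℝ)^2) * hN

lemma Nm_mul (k : ℕ) (a b : R k) : Nm k (a * b) = Nm k a * Nm k b := by
  simp only [Nm, Subring.coe_mul, Prod.fst_mul, Prod.snd_mul]
  ring

lemma Nm_unit_sq (k : ℕ) (u : (R k)ˣ) : Nm k (u : R k) ^ 2 = 1 := by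
  obtain ⟨m, hm⟩ := Nm_int k (u : R k)
  obtain ⟨n, hn⟩ := Nm_int k ((u⁻¹ : (R k)ˣ) : R k)
  have h1 : Nm k ((u : R k) * ((u⁻¹ : (R k)ˣ) : R k)) = 1 := by
    rw [Units.mul_inv]
    simp [Nm]
  rw [Nm_mul, hm, hn] at h1
  have : m * n = 1 := by exact_mod_cast h1
  have := Int.eq_one_or_neg_one_of_mul_eq_one' this
  rw [hm]
  rcases this with ⟨rfl, _⟩ | ⟨rfl, _⟩ <;> norm_num

lemma core (a a' b b' s t : ℝ) (hs : 0 < s)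
    (H : ∀ x₁ x₂ y₁ y₂ : ℝ, 0 < y₁ → 0 < y₂ →
      ((x₁-a)^2+y₁^2)*((x₂-a')^2+y₂^2) = s →
      ((x₁-b)^2+y₁^2)*((x₂-b')^2+y₂^2) = t) : a = b ∧ a' = b' ∧ s = t := by
  have key : ∀ v : ℝ, 0 < v → ((a-b)^2 + s/v^2) * ((a'-b')^2 + v^2) = t := by
    intro v hv
    have h1 : (0:ℝ) < Real.sqrt s / v := div_pos (Real.sqrt_pos.mpr hs) hv
    have hsq : (Real.sqrt s / v)^2 = s / v^2 := by
      rw [div_pow, Real.sq_sqrt hs.le]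
    have h2 := H a a' (Real.sqrt s / v) v h1 hv (by rw [hsq]; field_simp; ring)
    rw [hsq] at h2
    convert h2 using 2 <;> ring
  obtain ⟨α, hα⟩ : ∃ α, (a-b)^2 = α := ⟨_, rfl⟩
  obtain ⟨γ, hγ⟩ : ∃ γ, (a'-b')^2 = γ := ⟨_, rfl⟩
  rw [hα, hγ] at key
  have hα0 : 0 ≤ α := hα ▸ sq_nonneg _
  have hγ0 : 0 ≤ γ := hγ ▸ sq_nonneg _
  have E1 := key 1 one_pos
  have E2 := key 2 two_pos
  have E3 := key 3 (by norm_num)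
  norm_num at E1 E2 E3
  ring_nf at E1 E2 E3
  have hsγ : s * γ = 0 := by linarith
  have hγe : γ = 0 := by
    rcases mul_eq_zero.mp hsγ with h | h
    · exact absurd h hs.ne'
    · exact h
  have hαe : α = 0 := by rw [hγe] at E1 E2; linarith
  refine ⟨?_, ?_, ?_⟩
  · have := pow_eq_zero_iff (n := 2) (by norm_num) |>.mp (hα.trans hαe)
    linarith [sub_eq_zero.mp this]
  · have := pow_eq_zero_iff (n := 2) (by norm_num) |>.mp (hγ.trans hγe)
    linarith [sub_eq_zero.mp this]
  · rw [hαe, hγe] at E1; linarith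

lemma factor_eq (E F X Y : ℝ) (hE : E ≠ 0) :
    (E*X+F)^2 + E^2*Y^2 = E^2*((X - (-F/E))^2 + Y^2) := by
  field_simp; ring

lemma Veq_subset_of_unit (k : ℕ) (cd1 cd2 : R k × R k) (u : (R k)ˣ)
    (hc : cd2.1 = (u : R k) * cd1.1) (hd : cd2.2 = (u : R k) * cd1.2) :
    Veq k cd1 ⊆ Veq k cd2 := by
  intro p hp
  obtain ⟨hpH, hn⟩ := hp
  refine ⟨hpH, ?_⟩
  have hu := Nm_unit_sq k u
  simp only [Nm] at hu
  simp only [HNorm] at hn ⊢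
  rw [hc, hd]
  simp only [Subring.coe_mul, Prod.fst_mul, Prod.snd_mul]
  linear_combination ((((u : R k) : ℝ×ℝ)).1 * (((u : R k) : ℝ×ℝ)).2)^2 * hn + hu

lemma Veq_eq_HH (k : ℕ) (cd : R k × R k) (hc : cd.1 = 0) (hn : Nm k cd.2 ^ 2 = 1) :
    Veq k cd = HH := by
  ext p
  constructor
  · exact fun hp => hp.1
  · intro hp
    refine ⟨hp, ?_⟩
    simp only [Nm] at hn
    simp only [HNorm, hc, ZeroMemClass.coe_zero, Prod.fst_zero, Prod.snd_zero]
    linear_combination hn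

lemma Veq_ne_HH_aux (k : ℕ) (hk : Squarefree k) (hk1 : 1 < k) (cd : R k × R k)
    (hc : cd.1 ≠ 0) (hHH : Veq k cd = HH) : False := by
  obtain ⟨hC, hC'⟩ := comp_ne_zero k hk hk1 cd.1 hc
  set C := ((cd.1 : ℝ×ℝ)).1 with hCdef
  set C' := ((cd.1 : ℝ×ℝ)).2 with hC'def
  set D := ((cd.2 : ℝ×ℝ)).1 with hDdef
  set D' := ((cd.2 : ℝ×ℝ)).2 with hD'def
  have hmem : ∀ t : ℝ, 0 < t →
      HNorm (cd.1 : ℝ×ℝ) (cd.2 : ℝ×ℝ) (-D/C, -D'/C', t, t) = 1 := by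
    intro t ht
    have hp : ((-D/C, -D'/C', t, t) : Pt) ∈ HH := ⟨ht, ht⟩
    rw [← hHH] at hp
    exact hp.2
  have e1 := hmem 1 one_pos
  have e2 := hmem 2 two_pos
  simp only [HNorm, x1, x2, y1, y2] at e1 e2
  have hz1 : C * (-D/C) + D = 0 := by field_simp; ring
  have hz2 : C' * (-D'/C') + D' = 0 := by field_simp; ring
  rw [hz1, hz2] at e1 e2
  nlinarith [e1, e2]

lemma unit_of_span_zero (k : ℕ) (cd : R k × R k) (h : Ideal.span {cd.1, cd.2} = ⊤)
    (hc : cd.1 = 0) : IsUnit cd.2 := by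
  rw [Ideal.eq_top_iff_one] at h
  obtain ⟨x, y, hxy⟩ := Ideal.mem_span_pair.mp h
  rw [hc, mul_zero, zero_add] at hxy
  exact IsUnit.of_mul_eq_one _ (by rw [mul_comm]; exact hxy)

lemma main_center (k : ℕ) (hk : Squarefree k) (hk1 : 1 < k) (cd1 cd2 : R k × R k)
    (hc1 : cd1.1 ≠ 0) (hc2 : cd2.1 ≠ 0) (hsub : Veq k cd1 ⊆ Veq k cd2) :
    ((cd1.1 : ℝ×ℝ)).1 * ((cd2.2 : ℝ×ℝ)).1 = ((cd1.2 : ℝ×ℝ)).1 * ((cd2.1 : ℝ×ℝ)).1 ∧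
    ((cd1.1 : ℝ×ℝ)).2 * ((cd2.2 : ℝ×ℝ)).2 = ((cd1.2 : ℝ×ℝ)).2 * ((cd2.1 : ℝ×ℝ)).2 := by
  obtain ⟨hA, hA'⟩ := comp_ne_zero k hk hk1 cd1.1 hc1
  obtain ⟨hC, hC'⟩ := comp_ne_zero k hk hk1 cd2.1 hc2
  set A := ((cd1.1 : ℝ×ℝ)).1 with hAdef
  set A' := ((cd1.1 : ℝ×ℝ)).2 with hA'def
  set B := ((cd1.2 : ℝ×ℝ)).1 with hBdef
  set B' := ((cd1.2 : ℝ×ℝ)).2 with hB'def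
  set C := ((cd2.1 : ℝ×ℝ)).1 with hCdef
  set C' := ((cd2.1 : ℝ×ℝ)).2 with hC'def
  set D := ((cd2.2 : ℝ×ℝ)).1 with hDdef
  set D' := ((cd2.2 : ℝ×ℝ)).2 with hD'def
  have hs : (0:ℝ) < 1/(A^2*A'^2) := by positivity
  have H : ∀ x₁ x₂ y₁ y₂ : ℝ, 0 < y₁ → 0 < y₂ →
      ((x₁-(-B/A))^2+y₁^2)*((x₂-(-B'/A'))^2+y₂^2) = 1/(A^2*A'^2) →
      ((x₁-(-D/C))^2+y₁^2)*((x₂-(-D'/C'))^2+y₂^2) = 1/(C^2*C'^2) := by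
    intro x₁ x₂ y₁ y₂ hy₁ hy₂ hm
    have hp1 : ((x₁, x₂, y₁, y₂) : Pt) ∈ Veq k cd1 := by
      refine ⟨⟨hy₁, hy₂⟩, ?_⟩
      simp only [HNorm, x1, x2, y1, y2]
      rw [factor_eq A B x₁ y₁ hA, factor_eq A' B' x₂ y₂ hA']
      rw [show A^2*((x₁ - (-B/A))^2 + y₁^2) * (A'^2*((x₂-(-B'/A'))^2+y₂^2))
          = A^2*A'^2*(((x₁-(-B/A))^2+y₁^2)*((x₂-(-B'/A'))^2+y₂^2)) from by ring, hm]
      field_simp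
    have hp2 := hsub hp1
    have hn2 := hp2.2
    simp only [HNorm, x1, x2, y1, y2] at hn2
    rw [factor_eq C D x₁ y₁ hC, factor_eq C' D' x₂ y₂ hC'] at hn2
    have hprod : C^2*C'^2*(((x₁-(-D/C))^2+y₁^2)*((x₂-(-D'/C'))^2+y₂^2)) = 1 := by
      rw [← hn2]; ring
    rw [eq_div_iff (by positivity : (C:ℝ)^2*C'^2 ≠ 0)]
    linear_combination hprod
  obtain ⟨hab, hab', -⟩ := core (-B/A) (-B'/A') (-D/C) (-D'/C') _ _ hs H
  constructor
  · field_simp at hab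
    linear_combination hab
  · field_simp at hab'
    linear_combination hab'

/-- Let `(c₁,d₁), (c₂,d₂) ∈ S`. Then `V_{c₁,d₁} = V_{c₂,d₂}` if and only
if `(c₂,d₂) = (u c₁, u d₁)` for some unit `u` of `R`. Moreover, if `c₁d₂ = c₂d₁` and
`N(c₁)² ≠ N(c₂)²`, then `V_{c₁,d₁} ∩ V_{c₂,d₂} = ∅`. -/
theorem Veq_eq_iff (k : ℕ) (hk : Squarefree k) (hk1 : 1 < k)
    (cd1 cd2 : R k × R k) (h1 : cd1 ∈ Spairs k) (h2 : cd2 ∈ Spairs k) :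
    (Veq k cd1 = Veq k cd2 ↔
      ∃ u : (R k)ˣ, cd2.1 = (u : R k) * cd1.1 ∧ cd2.2 = (u : R k) * cd1.2) ∧
    (cd1.1 * cd2.2 = cd2.1 * cd1.2 → Nm k cd1.1 ^ 2 ≠ Nm k cd2.1 ^ 2 →
      Veq k cd1 ∩ Veq k cd2 = ∅) := by
  have hNm2 : ∀ cd : R k × R k, cd.1 = 0 → Nm k cd.1 = 0 := by
    intro cd hc; simp [Nm, hc]
  constructor
  · constructor
    · -- forward direction
      intro hV
      by_cases hc1 : cd1.1 = 0
      · have hd1 : IsUnit cd1.2 := unit_of_span_zero k cd1 h1 hc1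
        by_cases hc2 : cd2.1 = 0
        · have hd2 : IsUnit cd2.2 := unit_of_span_zero k cd2 h2 hc2
          refine ⟨hd2.unit * hd1.unit⁻¹, ?_, ?_⟩
          · simp only [hc1, hc2, mul_zero]
          · calc cd2.2 = ↑hd2.unit := hd2.unit_spec.symm
              _ = ↑hd2.unit * (↑hd1.unit⁻¹ * ↑hd1.unit) := by rw [Units.inv_mul, mul_one]
              _ = ↑(hd2.unit * hd1.unit⁻¹) * cd1.2 := by
                  rw [Units.val_mul, mul_assoc, hd1.unit_spec]
        · exfalso
          apply Veq_ne_HH_aux k hk hk1 cd2 hc2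
          rw [← hV]
          exact Veq_eq_HH k cd1 hc1 (by rw [← hd1.unit_spec]; exact Nm_unit_sq k hd1.unit)
      · by_cases hc2 : cd2.1 = 0
        · exfalso
          have hd2 : IsUnit cd2.2 := unit_of_span_zero k cd2 h2 hc2
          apply Veq_ne_HH_aux k hk hk1 cd1 hc1
          rw [hV]
          exact Veq_eq_HH k cd2 hc2 (by rw [← hd2.unit_spec]; exact Nm_unit_sq k hd2.unit)
        · -- main case
          obtain ⟨h11, h12⟩ := main_center k hk hk1 cd1 cd2 hc1 hc2 (hV.le)
          obtain ⟨hA, hA'⟩ := comp_ne_zero k hk hk1 cd1.1 hc1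
          have h1' : Ideal.span {cd1.1, cd1.2} = ⊤ := h1
          have h2' : Ideal.span {cd2.1, cd2.2} = ⊤ := h2
          rw [Ideal.eq_top_iff_one] at h1' h2'
          obtain ⟨x, y, hxy⟩ := Ideal.mem_span_pair.mp h1'
          obtain ⟨x', y', hxy'⟩ := Ideal.mem_span_pair.mp h2'
          set lam : R k := x * cd2.1 + y * cd2.2 with hlam
          set mu : R k := x' * cd1.1 + y' * cd1.2 with hmu
          have hcomp : ∀ z w : R k, z = w →
              ((z:ℝ×ℝ)).1 = ((w:ℝ×ℝ)).1 ∧ ((z:ℝ×ℝ)).2 = ((w:ℝ×ℝ)).2 := by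
            rintro z w rfl; exact ⟨rfl, rfl⟩
          have Rext : ∀ z w : R k, ((z:ℝ×ℝ)).1 = ((w:ℝ×ℝ)).1 →
              ((z:ℝ×ℝ)).2 = ((w:ℝ×ℝ)).2 → z = w := by
            intro z w hzw1 hzw2
            exact Subtype.ext (Prod.ext_iff.mpr ⟨hzw1, hzw2⟩)
          obtain ⟨hxy1, hxy2⟩ := hcomp _ _ hxy
          obtain ⟨hxy'1, hxy'2⟩ := hcomp _ _ hxy'
          simp only [Subring.coe_add, Subring.coe_mul, Prod.fst_add, Prod.snd_add,
            Prod.fst_mul, Prod.snd_mul, OneMemClass.coe_one, Prod.fst_one, Prod.snd_one]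
            at hxy1 hxy2 hxy'1 hxy'2
          have e1 : lam * cd1.1 = cd2.1 := by
            apply Rext <;>
              simp only [hlam, Subring.coe_add, Subring.coe_mul, Prod.fst_add, Prod.snd_add,
                Prod.fst_mul, Prod.snd_mul]
            · linear_combination ((cd2.1:ℝ×ℝ)).1 * hxy1 + ((y:ℝ×ℝ)).1 * h11
            · linear_combination ((cd2.1:ℝ×ℝ)).2 * hxy2 + ((y:ℝ×ℝ)).2 * h12
          have e2 : lam * cd1.2 = cd2.2 := by
            apply Rext <;>
              simp only [hlam, Subring.coe_add, Subring.coe_mul, Prod.fst_add, Prod.snd_add,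
                Prod.fst_mul, Prod.snd_mul]
            · linear_combination ((cd2.2:ℝ×ℝ)).1 * hxy1 - ((x:ℝ×ℝ)).1 * h11
            · linear_combination ((cd2.2:ℝ×ℝ)).2 * hxy2 - ((x:ℝ×ℝ)).2 * h12
          have e3 : mu * cd2.1 = cd1.1 := by
            apply Rext <;>
              simp only [hmu, Subring.coe_add, Subring.coe_mul, Prod.fst_add, Prod.snd_add,
                Prod.fst_mul, Prod.snd_mul]
            · linear_combination ((cd1.1:ℝ×ℝ)).1 * hxy'1 - ((y':ℝ×ℝ)).1 * h11
            · linear_combination ((cd1.1:ℝ×ℝ)).2 * hxy'2 - ((y':ℝ×ℝ)).2 * h12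
          have e4 : mu * cd2.2 = cd1.2 := by
            apply Rext <;>
              simp only [hmu, Subring.coe_add, Subring.coe_mul, Prod.fst_add, Prod.snd_add,
                Prod.fst_mul, Prod.snd_mul]
            · linear_combination ((cd1.2:ℝ×ℝ)).1 * hxy'1 + ((x':ℝ×ℝ)).1 * h11
            · linear_combination ((cd1.2:ℝ×ℝ)).2 * hxy'2 + ((x':ℝ×ℝ)).2 * h12
          have hlm : lam * mu = 1 := by
            have h5 : lam * mu = x' * (lam * cd1.1) + y' * (lam * cd1.2) := by
              rw [hmu]; ring
            rw [h5, e1, e2, hxy']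
          exact ⟨⟨lam, mu, hlm, by rw [mul_comm]; exact hlm⟩, e1.symm, e2.symm⟩
    · -- reverse direction
      rintro ⟨u, hc, hd⟩
      apply le_antisymm
      · exact Veq_subset_of_unit k cd1 cd2 u hc hd
      · refine Veq_subset_of_unit k cd2 cd1 u⁻¹ ?_ ?_
        · rw [hc, ← mul_assoc, Units.inv_mul, one_mul]
        · rw [hd, ← mul_assoc, Units.inv_mul, one_mul]
  · -- part 2
    intro hcd hN
    by_cases hc1 : cd1.1 = 0
    · exfalso
      by_cases hc2 : cd2.1 = 0
      · exact hN (by rw [hNm2 cd1 hc1, hNm2 cd2 hc2])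
      · obtain ⟨hC, hC'⟩ := comp_ne_zero k hk hk1 cd2.1 hc2
        rw [hc1, zero_mul] at hcd
        have hd1 : cd1.2 = 0 := by
          have h0 := congrArg (Subtype.val) hcd
          simp only [Subring.coe_mul, ZeroMemClass.coe_zero, Prod.ext_iff,
            Prod.fst_mul, Prod.snd_mul, Prod.fst_zero, Prod.snd_zero] at h0
          apply Subtype.ext
          apply Prod.ext_iff.mpr
          constructor
          · have := h0.1.symm
            simpa [hC] using mul_eq_zero.mp this
          · have := h0.2.symm
            simpa [hC'] using mul_eq_zero.mp this
        have h1' : Ideal.span {cd1.1, cd1.2} = ⊤ := h1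
        rw [Ideal.eq_top_iff_one] at h1'
        obtain ⟨x, y, hxy⟩ := Ideal.mem_span_pair.mp h1'
        rw [hc1, hd1, mul_zero, mul_zero, add_zero] at hxy
        have := congrArg (fun z : R k => ((z : ℝ×ℝ)).1) hxy
        simpa using this
    · by_cases hc2 : cd2.1 = 0
      · exfalso
        obtain ⟨hA, hA'⟩ := comp_ne_zero k hk hk1 cd1.1 hc1
        rw [hc2, zero_mul] at hcd
        have hd2 : cd2.2 = 0 := by
          have h0 := congrArg (Subtype.val) hcd
          simp only [Subring.coe_mul, ZeroMemClass.coe_zero, Prod.ext_iff,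
            Prod.fst_mul, Prod.snd_mul, Prod.fst_zero, Prod.snd_zero] at h0
          apply Subtype.ext
          apply Prod.ext_iff.mpr
          constructor
          · simpa [hA] using mul_eq_zero.mp h0.1
          · simpa [hA'] using mul_eq_zero.mp h0.2
        have h2' : Ideal.span {cd2.1, cd2.2} = ⊤ := h2
        rw [Ideal.eq_top_iff_one] at h2'
        obtain ⟨x, y, hxy⟩ := Ideal.mem_span_pair.mp h2'
        rw [hc2, hd2, mul_zero, mul_zero, add_zero] at hxy
        have := congrArg (fun z : R k => ((z : ℝ×ℝ)).1) hxy
        simpa using this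
      · rw [Set.eq_empty_iff_forall_notMem]
        intro p hp
        obtain ⟨⟨hpH, ep1⟩, -, ep2⟩ := hp
        apply hN
        have hcc := congrArg Subtype.val hcd
        simp only [Subring.coe_mul, Prod.ext_iff, Prod.fst_mul, Prod.snd_mul] at hcc
        obtain ⟨hcc1, hcc2⟩ := hcc
        set A := ((cd1.1 : ℝ×ℝ)).1 with hAdef
        set A' := ((cd1.1 : ℝ×ℝ)).2 with hA'def
        set B := ((cd1.2 : ℝ×ℝ)).1 with hBdef
        set B' := ((cd1.2 : ℝ×ℝ)).2 with hB'def
        set C := ((cd2.1 : ℝ×ℝ)).1 with hCdef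
        set C' := ((cd2.1 : ℝ×ℝ)).2 with hC'def
        set D := ((cd2.2 : ℝ×ℝ)).1 with hDdef
        set D' := ((cd2.2 : ℝ×ℝ)).2 with hD'def
        simp only [HNorm] at ep1 ep2
        simp only [Nm]
        have g1 : A^2*((C*x1 p+D)^2 + C^2*(y1 p)^2) = C^2*((A*x1 p+B)^2 + A^2*(y1 p)^2) := by
          linear_combination (2*A*C*x1 p + A*D + C*B) * hcc1
        have g2 : A'^2*((C'*x2 p+D')^2 + C'^2*(y2 p)^2)
            = C'^2*((A'*x2 p+B')^2 + A'^2*(y2 p)^2) := by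
          linear_combination (2*A'*C'*x2 p + A'*D' + C'*B') * hcc2
        linear_combination (C*C')^2 * ep1 - (A*A')^2 * ep2
          + (A'^2*((C'*x2 p+D')^2 + C'^2*(y2 p)^2)) * g1
          + (C^2*((A*x1 p+B)^2 + A^2*(y1 p)^2)) * g2


end Hilbert
end
end
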